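/- arXiv:2102.04123 — 2 statements merged into one kernel-verified Lean document; each statement's English description precedes it below -/
import Mathlib

section
/- Let r < P, and let B be a real P×r matrix and B^c a real P×(P−r) matrix such that the P×P matrix (B, B^c) is orthogonal, i.e., BᵀB = I_r, (B^c)ᵀB^c = I_{P−r}, and BᵀB^c = 0. Then for every real (P−r)×r matrix P0, the matrix B̂ := (B + B^c·P0)(I_r + P0ᵀP0)^{−1/2} satisfies B̂ᵀB̂ = I_r and ‖B̂ − B‖ ≤ 2‖P0‖. -/
open Matrix

/-- The eigenvalues of a real symmetric matrix, listed in **decreasing** order (with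
multiplicity): `eigsDesc hA i` is the `(i+1)`-th largest eigenvalue of `A`. -/
noncomputable def eigsDesc {n : ℕ} {A : Matrix (Fin n) (Fin n) ℝ} (hA : A.IsHermitian) :
    Fin n → ℝ :=
  fun i => hA.eigenvalues (Tuple.sort hA.eigenvalues i.rev)

lemma isHermitian_mul_transpose_self {m n : ℕ} (C : Matrix (Fin m) (Fin n) ℝ) :
    (C * Cᵀ).IsHermitian := by
  simpa [Matrix.conjTranspose_eq_transpose_of_trivial] using
    Matrix.isHermitian_mul_conjTranspose_self C

/-- The operator (spectral) norm of a real matrix `C`: the square root of the largest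
eigenvalue of `C * Cᵀ`. -/
noncomputable def specNorm {m n : ℕ} (C : Matrix (Fin m) (Fin n) ℝ) : ℝ :=
  Real.sqrt (⨆ i, (isHermitian_mul_transpose_self C).eigenvalues i)

lemma isHermitian_transpose_mul_mul {m n : ℕ} {A : Matrix (Fin m) (Fin m) ℝ}
    (hA : A.IsHermitian) (B : Matrix (Fin m) (Fin n) ℝ) : (Bᵀ * A * B).IsHermitian := by
  simpa [Matrix.conjTranspose_eq_transpose_of_trivial] using
    Matrix.isHermitian_conjTranspose_mul_mul B hA

lemma isHermitian_mul_mul_transpose {m n : ℕ} {A : Matrix (Fin m) (Fin m) ℝ}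
    (hA : A.IsHermitian) (B : Matrix (Fin n) (Fin m) ℝ) : (B * A * Bᵀ).IsHermitian := by
  simpa [Matrix.conjTranspose_eq_transpose_of_trivial] using
    Matrix.isHermitian_mul_mul_conjTranspose B hA

lemma posSemidef_one_add_transpose_mul {m n : ℕ} (P : Matrix (Fin m) (Fin n) ℝ) :
    ((1 : Matrix (Fin n) (Fin n) ℝ) + Pᵀ * P).PosSemidef := by
  have h := (Matrix.PosSemidef.one (n := Fin n) (R := ℝ)).add
    (Matrix.posSemidef_conjTranspose_mul_self P)
  simpa [Matrix.conjTranspose_eq_transpose_of_trivial] using h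

open scoped ComplexOrder in
/-- The positive semidefinite square root of a positive semidefinite matrix (the definition
`Matrix.PosSemidef.sqrt` of the older Mathlib, since removed). -/
noncomputable def Matrix.PosSemidef.sqrt {n : Type*} [Fintype n] [DecidableEq n] {𝕜 : Type*}
    [RCLike 𝕜] {A : Matrix n n 𝕜} (hA : A.PosSemidef) : Matrix n n 𝕜 :=
  (hA.1.eigenvectorUnitary : Matrix n n 𝕜) * diagonal ((↑) ∘ (√·) ∘ hA.1.eigenvalues) *
    (star (hA.1.eigenvectorUnitary : Matrix n n 𝕜))

section Auxiliary

open scoped Matrix.Norms.L2Operator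

lemma myOpNorm_le {m n : ℕ} (A : Matrix (Fin m) (Fin n) ℝ) {M : ℝ} (hM : 0 ≤ M)
    (h : ∀ x : EuclideanSpace ℝ (Fin n), ‖(EuclideanSpace.equiv (Fin m) ℝ).symm (A *ᵥ x)‖ ≤ M * ‖x‖) :
    ‖A‖ ≤ M := by
  rw [Matrix.l2_opNorm_def]
  exact ContinuousLinearMap.opNorm_le_bound _ hM (fun x => h x)

lemma myNorm_diag_le {n : ℕ} (e : Fin n → ℝ) {M : ℝ} (hM : 0 ≤ M) (h : ∀ i, |e i| ≤ M) :
    ‖(diagonal e : Matrix (Fin n) (Fin n) ℝ)‖ ≤ M := by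
  refine myOpNorm_le _ hM fun x => ?_
  rw [EuclideanSpace.norm_eq, EuclideanSpace.norm_eq]
  rw [← Real.sqrt_sq hM, ← Real.sqrt_mul (by positivity)]
  apply Real.sqrt_le_sqrt
  rw [Finset.mul_sum]
  apply Finset.sum_le_sum
  intro i _
  have hd : (diagonal e *ᵥ x) i = e i * x i := by simp [mulVec_diagonal]
  simp only [EuclideanSpace.equiv, LinearEquiv.coe_symm_mk]
  calc ‖((WithLp.equiv 2 _).symm (diagonal e *ᵥ (x : Fin n → ℝ))) i‖ ^ 2
      = (e i * x i) ^ 2 := by rw [Real.norm_eq_abs, sq_abs]; exact congrArg (· ^ 2) hd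
    _ ≤ M ^ 2 * ‖(x : EuclideanSpace ℝ (Fin n)) i‖ ^ 2 := by
        rw [Real.norm_eq_abs, sq_abs]
        have h2 : (e i)^2 ≤ M^2 := by
          rw [← sq_abs]; exact pow_le_pow_left₀ (abs_nonneg _) (h i) 2
        rw [mul_pow]
        exact mul_le_mul_of_nonneg_right h2 (sq_nonneg _)

lemma myAbsEig_le {n : ℕ} {A : Matrix (Fin n) (Fin n) ℝ} (hA : A.IsHermitian) (i : Fin n) :
    |hA.eigenvalues i| ≤ ‖A‖ := by
  set b := hA.eigenvectorBasis
  have hb : A *ᵥ ⇑(b i) = hA.eigenvalues i • ⇑(b i) := hA.mulVec_eigenvectorBasis i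
  have h1 : ‖(EuclideanSpace.equiv (Fin n) ℝ).symm (A *ᵥ ⇑(b i))‖ ≤ ‖A‖ * ‖b i‖ :=
    Matrix.l2_opNorm_mulVec A (b i)
  have h2 : (EuclideanSpace.equiv (Fin n) ℝ).symm (A *ᵥ ⇑(b i)) = hA.eigenvalues i • (b i) := by
    rw [hb]; rfl
  have h3 : ‖b i‖ = 1 := b.orthonormal.1 i
  rw [h2, norm_smul, h3, mul_one] at h1
  simpa using h1

lemma myNorm_lmul {m n k : ℕ} {B : Matrix (Fin m) (Fin n) ℝ} (hB : Bᴴ * B = 1)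
    (X : Matrix (Fin n) (Fin k) ℝ) : ‖B * X‖ = ‖X‖ := by
  have h1 : ‖B * X‖ * ‖B * X‖ = ‖X‖ * ‖X‖ := by
    rw [← Matrix.l2_opNorm_conjTranspose_mul_self (B * X),
      ← Matrix.l2_opNorm_conjTranspose_mul_self X]
    congr 1
    rw [conjTranspose_mul]
    rw [Matrix.mul_assoc Xᴴ Bᴴ (B * X), ← Matrix.mul_assoc Bᴴ B X, hB, Matrix.one_mul]
  nlinarith [norm_nonneg (B * X), norm_nonneg X]

lemma myNorm_rmul {m n k : ℕ} {W : Matrix (Fin m) (Fin n) ℝ} (hW : W * Wᴴ = 1)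
    (X : Matrix (Fin k) (Fin m) ℝ) : ‖X * W‖ = ‖X‖ := by
  rw [← Matrix.l2_opNorm_conjTranspose (X * W), conjTranspose_mul,
    myNorm_lmul (by rw [conjTranspose_conjTranspose]; exact hW),
    Matrix.l2_opNorm_conjTranspose]

lemma mySupEig_eq_norm {n : ℕ} [Nonempty (Fin n)] {A : Matrix (Fin n) (Fin n) ℝ}
    (hA : A.PosSemidef) : (⨆ i, hA.1.eigenvalues i) = ‖A‖ := by
  apply le_antisymm
  · exact ciSup_le fun i => (le_abs_self _).trans (myAbsEig_le hA.1 i)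
  · have hU : (hA.1.eigenvectorUnitary : Matrix (Fin n) (Fin n) ℝ)ᴴ *
        (hA.1.eigenvectorUnitary : Matrix (Fin n) (Fin n) ℝ) = 1 := by
      simpa [Matrix.star_eq_conjTranspose] using Unitary.coe_star_mul_self hA.1.eigenvectorUnitary
    have hM0 : 0 ≤ ⨆ i, hA.1.eigenvalues i := by
      obtain ⟨i⟩ := ‹Nonempty (Fin n)›
      exact (hA.eigenvalues_nonneg i).trans (le_ciSup (Finite.bddAbove_range _) i)
    calc ‖A‖ = ‖(hA.1.eigenvectorUnitary : Matrix (Fin n) (Fin n) ℝ) *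
          diagonal (RCLike.ofReal ∘ hA.1.eigenvalues) *
          star (hA.1.eigenvectorUnitary : Matrix (Fin n) (Fin n) ℝ)‖ := by
          conv_lhs => rw [hA.1.spectral_theorem]
          rfl
      _ = ‖diagonal (hA.1.eigenvalues)‖ := by
          rw [mul_assoc, myNorm_lmul hU,
            myNorm_rmul (by simpa [Matrix.star_eq_conjTranspose] using hU),
            RCLike.ofReal_real_eq_id]
          rfl
      _ ≤ ⨆ i, hA.1.eigenvalues i := by
          refine myNorm_diag_le _ hM0 fun i => ?_
          rw [abs_of_nonneg (hA.eigenvalues_nonneg i)]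
          exact le_ciSup (Finite.bddAbove_range _) i

lemma mySpecNorm_eq {m n : ℕ} [Nonempty (Fin m)] (C : Matrix (Fin m) (Fin n) ℝ) :
    specNorm C = ‖C‖ := by
  have hpsd : (C * Cᵀ).PosSemidef := by
    simpa [Matrix.conjTranspose_eq_transpose_of_trivial] using
      Matrix.posSemidef_self_mul_conjTranspose C
  have h1 : (⨆ i, (isHermitian_mul_transpose_self C).eigenvalues i) = ‖C * Cᵀ‖ :=
    mySupEig_eq_norm hpsd
  have h2 : ‖C * Cᵀ‖ = ‖C‖ * ‖C‖ := by
    have h3 : ‖Cᵀ‖ = ‖C‖ := by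
      rw [← Matrix.conjTranspose_eq_transpose_of_trivial, Matrix.l2_opNorm_conjTranspose]
    have := Matrix.l2_opNorm_conjTranspose_mul_self Cᵀ
    rw [Matrix.conjTranspose_eq_transpose_of_trivial, transpose_transpose, h3] at this
    exact this
  rw [specNorm, h1, h2, Real.sqrt_mul_self (norm_nonneg C)]

lemma myScalarInv {a : ℝ} (ha : 1 ≤ a) : |(Real.sqrt a)⁻¹| ≤ 1 := by
  have h1 : 1 ≤ Real.sqrt a := Real.one_le_sqrt.mpr ha
  rw [abs_of_nonneg (by positivity)]
  exact inv_le_one_of_one_le₀ h1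

lemma myScalarKey {a p : ℝ} (ha : 1 ≤ a) (hp : 0 ≤ p) (hle : a ≤ 1 + p ^ 2) :
    |(Real.sqrt a)⁻¹ - 1| ≤ p := by
  set s := Real.sqrt a with hs
  have h1 : 1 ≤ s := Real.one_le_sqrt.mpr ha
  have hs0 : 0 < s := by linarith
  have hsq : s ^ 2 = a := Real.sq_sqrt (by linarith)
  set b := s⁻¹ with hbdef
  have hb1 : s * b = 1 := mul_inv_cancel₀ (ne_of_gt hs0)
  have hb0 : 0 < b := by positivity
  have hble : b ≤ 1 := inv_le_one_of_one_le₀ h1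
  rw [abs_of_nonpos (by linarith)]
  have key : (1 - b) * (1 + b) ≤ p ^ 2 := by nlinarith
  nlinarith [sq_nonneg (1 - b - p), sq_nonneg (1 - b + p)]

lemma myDotSelf {m : ℕ} (w : Fin m → ℝ) :
    dotProduct w w = ‖(EuclideanSpace.equiv (Fin m) ℝ).symm w‖ ^ 2 := by
  rw [EuclideanSpace.norm_eq, Real.sq_sqrt (by positivity)]
  simp [dotProduct, sq]

lemma myEigBounds {m n : ℕ} (P0 : Matrix (Fin m) (Fin n) ℝ) (i : Fin n) :
    1 ≤ (posSemidef_one_add_transpose_mul P0).1.eigenvalues i ∧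
      (posSemidef_one_add_transpose_mul P0).1.eigenvalues i ≤ 1 + ‖P0‖ ^ 2 := by
  set hS := posSemidef_one_add_transpose_mul P0
  set d := hS.1.eigenvalues with hd
  set v := hS.1.eigenvectorBasis i with hv
  have hmv : ((1 : Matrix (Fin n) (Fin n) ℝ) + P0ᵀ * P0) *ᵥ ⇑v = d i • ⇑v :=
    hS.1.mulVec_eigenvectorBasis i
  have hvv : dotProduct ⇑v ⇑v = 1 := by
    have h2 : (inner ℝ v v : ℝ) = ‖v‖ ^ 2 := real_inner_self_eq_norm_sq v
    have h3 : ‖v‖ = 1 := hS.1.eigenvectorBasis.orthonormal.1 i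
    have h4 : (inner ℝ v v : ℝ) = dotProduct ⇑v ⇑v := by
      simp [PiLp.inner_apply, dotProduct, RCLike.inner_apply, mul_comm]
      rw [EuclideanSpace.norm_eq, Real.sq_sqrt (by positivity)]
      simp [sq]
    rw [← h4, h2, h3, one_pow]
  have hdot : dotProduct ⇑v (((1 : Matrix (Fin n) (Fin n) ℝ) + P0ᵀ * P0) *ᵥ ⇑v)
      = d i := by
    rw [hmv, dotProduct_smul, smul_eq_mul, hvv, mul_one]
  have hexp : dotProduct ⇑v (((1 : Matrix (Fin n) (Fin n) ℝ) + P0ᵀ * P0) *ᵥ ⇑v)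
      = 1 + dotProduct (P0 *ᵥ ⇑v) (P0 *ᵥ ⇑v) := by
    rw [add_mulVec, one_mulVec, dotProduct_add, hvv, ← mulVec_mulVec,
      dotProduct_mulVec ⇑v P0ᵀ, vecMul_transpose]
  have hnn : d i = 1 + dotProduct (P0 *ᵥ ⇑v) (P0 *ᵥ ⇑v) := by rw [← hdot, hexp]
  constructor
  · rw [hnn]
    have : (0:ℝ) ≤ dotProduct (P0 *ᵥ ⇑v) (P0 *ᵥ ⇑v) := by
      rw [myDotSelf]; positivity
    linarith
  · rw [hnn, myDotSelf]
    have h5 : ‖(EuclideanSpace.equiv (Fin m) ℝ).symm (P0 *ᵥ ⇑v)‖ ≤ ‖P0‖ * ‖v‖ :=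
      Matrix.l2_opNorm_mulVec P0 v
    rw [hS.1.eigenvectorBasis.orthonormal.1 i, mul_one] at h5
    have := norm_nonneg ((EuclideanSpace.equiv (Fin m) ℝ).symm (P0 *ᵥ ⇑v))
    nlinarith

lemma mySqrtEq {m n : ℕ} (P0 : Matrix (Fin m) (Fin n) ℝ) :
    (posSemidef_one_add_transpose_mul P0).sqrt =
      ((posSemidef_one_add_transpose_mul P0).1.eigenvectorUnitary : Matrix (Fin n) (Fin n) ℝ) *
        diagonal (Real.sqrt ∘ (posSemidef_one_add_transpose_mul P0).1.eigenvalues) *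
        star ((posSemidef_one_add_transpose_mul P0).1.eigenvectorUnitary :
          Matrix (Fin n) (Fin n) ℝ) := by
  rw [Matrix.PosSemidef.sqrt, RCLike.ofReal_real_eq_id]
  rfl

lemma mySqrtInv {m n : ℕ} (P0 : Matrix (Fin m) (Fin n) ℝ) :
    ((posSemidef_one_add_transpose_mul P0).sqrt)⁻¹ =
      ((posSemidef_one_add_transpose_mul P0).1.eigenvectorUnitary : Matrix (Fin n) (Fin n) ℝ) *
        diagonal (fun i => (Real.sqrt ((posSemidef_one_add_transpose_mul P0).1.eigenvalues i))⁻¹) *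
        star ((posSemidef_one_add_transpose_mul P0).1.eigenvectorUnitary :
          Matrix (Fin n) (Fin n) ℝ) := by
  set hS := posSemidef_one_add_transpose_mul P0
  set U : Matrix (Fin n) (Fin n) ℝ := (hS.1.eigenvectorUnitary : Matrix (Fin n) (Fin n) ℝ) with hU
  have hUU : star U * U = 1 := Unitary.coe_star_mul_self hS.1.eigenvectorUnitary
  have hUU' : U * star U = 1 := Unitary.coe_mul_star_self hS.1.eigenvectorUnitary
  apply inv_eq_right_inv
  rw [mySqrtEq]
  have key : ∀ (f g : Fin n → ℝ), (U * diagonal f * star U) * (U * diagonal g * star U)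
      = U * diagonal (fun i => f i * g i) * star U := by
    intro f g
    calc (U * diagonal f * star U) * (U * diagonal g * star U)
        = U * (diagonal f * (star U * U) * diagonal g) * star U := by
          simp only [Matrix.mul_assoc]
      _ = U * diagonal (fun i => f i * g i) * star U := by
          rw [hUU, Matrix.mul_one, diagonal_mul_diagonal]
  rw [key]
  have : (fun i => (Real.sqrt ∘ hS.1.eigenvalues) i *
      (Real.sqrt (hS.1.eigenvalues i))⁻¹) = fun _ => (1:ℝ) := by
    funext i
    have h1 : (0:ℝ) < Real.sqrt (hS.1.eigenvalues i) :=
      Real.sqrt_pos.mpr (by linarith [(myEigBounds P0 i).1])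
    exact mul_inv_cancel₀ (ne_of_gt h1)
  rw [this, diagonal_one, Matrix.mul_one, hUU']

lemma mySqrtMulSelf {m n : ℕ} (P0 : Matrix (Fin m) (Fin n) ℝ) :
    (posSemidef_one_add_transpose_mul P0).sqrt * (posSemidef_one_add_transpose_mul P0).sqrt =
      1 + P0ᵀ * P0 := by
  set hS := posSemidef_one_add_transpose_mul P0
  have hUU : star (hS.1.eigenvectorUnitary : Matrix (Fin n) (Fin n) ℝ) *
      (hS.1.eigenvectorUnitary : Matrix (Fin n) (Fin n) ℝ) = 1 :=
    Unitary.coe_star_mul_self hS.1.eigenvectorUnitary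
  rw [mySqrtEq]
  calc (hS.1.eigenvectorUnitary : Matrix (Fin n) (Fin n) ℝ) *
        diagonal (Real.sqrt ∘ hS.1.eigenvalues) * star (hS.1.eigenvectorUnitary : Matrix (Fin n) (Fin n) ℝ) *
        ((hS.1.eigenvectorUnitary : Matrix (Fin n) (Fin n) ℝ) *
        diagonal (Real.sqrt ∘ hS.1.eigenvalues) * star (hS.1.eigenvectorUnitary : Matrix (Fin n) (Fin n) ℝ))
      = (hS.1.eigenvectorUnitary : Matrix (Fin n) (Fin n) ℝ) *
        (diagonal (Real.sqrt ∘ hS.1.eigenvalues) * (star (hS.1.eigenvectorUnitary : Matrix (Fin n) (Fin n) ℝ) *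
          (hS.1.eigenvectorUnitary : Matrix (Fin n) (Fin n) ℝ)) * diagonal (Real.sqrt ∘ hS.1.eigenvalues)) *
        star (hS.1.eigenvectorUnitary : Matrix (Fin n) (Fin n) ℝ) := by
        simp only [Matrix.mul_assoc]
    _ = (hS.1.eigenvectorUnitary : Matrix (Fin n) (Fin n) ℝ) *
        diagonal (RCLike.ofReal ∘ hS.1.eigenvalues) *
        star (hS.1.eigenvectorUnitary : Matrix (Fin n) (Fin n) ℝ) := by
        rw [hUU, Matrix.mul_one, diagonal_mul_diagonal]
        refine congrArg (fun D => _ * D * _) (congrArg diagonal (funext fun i => ?_))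
        simp only [Function.comp_apply, RCLike.ofReal_real_eq_id, id]
        exact Real.mul_self_sqrt (by linarith [(myEigBounds P0 i).1])
    _ = 1 + P0ᵀ * P0 := (hS.1.spectral_theorem).symm

lemma mySqrtHerm {m n : ℕ} (P0 : Matrix (Fin m) (Fin n) ℝ) :
    ((posSemidef_one_add_transpose_mul P0).sqrt)ᴴ = (posSemidef_one_add_transpose_mul P0).sqrt := by
  rw [mySqrtEq]
  simp [conjTranspose_mul, Matrix.mul_assoc, Matrix.star_eq_conjTranspose, diagonal_conjTranspose]

lemma myBound {P r : ℕ} (hr : r < P)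
    (B : Matrix (Fin P) (Fin r) ℝ) (Bc : Matrix (Fin P) (Fin (P - r)) ℝ)
    (hB : Bᵀ * B = 1) (hBc : Bcᵀ * Bc = 1) (hBBc : Bᵀ * Bc = 0)
    (P0 : Matrix (Fin (P - r)) (Fin r) ℝ) :
    ‖(B + Bc * P0) * ((posSemidef_one_add_transpose_mul P0).sqrt)⁻¹ - B‖ ≤ 2 * ‖P0‖ := by
  set hS := posSemidef_one_add_transpose_mul P0 with hSdef
  set T := hS.sqrt with hT
  set U : Matrix (Fin r) (Fin r) ℝ := (hS.1.eigenvectorUnitary : Matrix (Fin r) (Fin r) ℝ)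
    with hUdef
  set d := hS.1.eigenvalues with hd
  set e : Fin r → ℝ := fun i => (Real.sqrt (d i))⁻¹ with he
  have hUU : star U * U = 1 := Unitary.coe_star_mul_self hS.1.eigenvectorUnitary
  have hUU' : U * star U = 1 := Unitary.coe_mul_star_self hS.1.eigenvectorUnitary
  have hUH : Uᴴ * U = 1 := by rw [← Matrix.star_eq_conjTranspose]; exact hUU
  have hW : (star U) * (star U)ᴴ = 1 := by
    rw [Matrix.star_eq_conjTranspose, conjTranspose_conjTranspose]; exact hUH
  have hTinv : T⁻¹ = U * diagonal e * star U := mySqrtInv P0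
  have hp : (0:ℝ) ≤ ‖P0‖ := norm_nonneg _
  have hconj : ∀ f : Fin r → ℝ, ‖U * diagonal f * star U‖ = ‖diagonal f‖ := by
    intro f
    rw [Matrix.mul_assoc, myNorm_lmul hUH, myNorm_rmul hW]
  have hTinvNorm : ‖T⁻¹‖ ≤ 1 := by
    rw [hTinv, hconj]
    exact myNorm_diag_le _ zero_le_one fun i => myScalarInv (myEigBounds P0 i).1
  have hsub : T⁻¹ - 1 = U * diagonal (fun i => e i - 1) * star U := by
    have h0 : (diagonal (fun i => e i - 1) : Matrix (Fin r) (Fin r) ℝ) = diagonal e - 1 := by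
      rw [← diagonal_one, Matrix.diagonal_sub]
    rw [hTinv, h0, Matrix.mul_sub, Matrix.sub_mul, Matrix.mul_one, hUU']
  have hsubNorm : ‖T⁻¹ - 1‖ ≤ ‖P0‖ := by
    rw [hsub, hconj]
    exact myNorm_diag_le _ hp fun i =>
      myScalarKey (myEigBounds P0 i).1 hp (myEigBounds P0 i).2
  have hB' : Bᴴ * B = 1 := by
    rw [Matrix.conjTranspose_eq_transpose_of_trivial]; exact hB
  have hBc' : Bcᴴ * Bc = 1 := by
    rw [Matrix.conjTranspose_eq_transpose_of_trivial]; exact hBc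
  have hdecomp : (B + Bc * P0) * T⁻¹ - B = B * (T⁻¹ - 1) + Bc * (P0 * T⁻¹) := by
    rw [Matrix.mul_sub, Matrix.mul_one, Matrix.add_mul, ← Matrix.mul_assoc]
    abel
  calc ‖(B + Bc * P0) * T⁻¹ - B‖
      ≤ ‖B * (T⁻¹ - 1)‖ + ‖Bc * (P0 * T⁻¹)‖ := by rw [hdecomp]; exact norm_add_le _ _
    _ = ‖T⁻¹ - 1‖ + ‖P0 * T⁻¹‖ := by rw [myNorm_lmul hB', myNorm_lmul hBc']
    _ ≤ ‖P0‖ + ‖P0‖ * ‖T⁻¹‖ := add_le_add hsubNorm (Matrix.l2_opNorm_mul _ _)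
    _ ≤ ‖P0‖ + ‖P0‖ * 1 := by nlinarith
    _ = 2 * ‖P0‖ := by ring

end Auxiliary

/-- Let the `P × P` matrix `(B, Bᶜ)` be orthogonal, i.e. `Bᵀ B = I_r`,
`(Bᶜ)ᵀ Bᶜ = I_{P−r}` and `Bᵀ Bᶜ = 0`. Then for every `(P−r) × r` matrix `P0`, the
matrix `B̂ = (B + Bᶜ P0)(I_r + P0ᵀ P0)^{−1/2}` has orthonormal columns and
`‖B̂ − B‖ ≤ 2 ‖P0‖`. -/
theorem rotated_orthonormal_frame_close {P r : ℕ} (hr : r < P)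
    (B : Matrix (Fin P) (Fin r) ℝ) (Bc : Matrix (Fin P) (Fin (P - r)) ℝ)
    (hB : Bᵀ * B = 1) (hBc : Bcᵀ * Bc = 1) (hBBc : Bᵀ * Bc = 0) :
    ∀ P0 : Matrix (Fin (P - r)) (Fin r) ℝ,
      ((B + Bc * P0) * ((posSemidef_one_add_transpose_mul P0).sqrt)⁻¹)ᵀ *
          ((B + Bc * P0) * ((posSemidef_one_add_transpose_mul P0).sqrt)⁻¹) = 1 ∧
      specNorm ((B + Bc * P0) * ((posSemidef_one_add_transpose_mul P0).sqrt)⁻¹ - B) ≤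
        2 * specNorm P0 := by
  intro P0
  haveI hPne : Nonempty (Fin P) := ⟨⟨0, Nat.lt_of_le_of_lt (Nat.zero_le r) hr⟩⟩
  haveI hPrne : Nonempty (Fin (P - r)) := ⟨⟨0, Nat.sub_pos_of_lt hr⟩⟩
  set hS := posSemidef_one_add_transpose_mul P0 with hSdef
  set T := hS.sqrt with hT
  have hdetS : (0:ℝ) < ((1 : Matrix (Fin r) (Fin r) ℝ) + P0ᵀ * P0).det := by
    rw [hS.1.det_eq_prod_eigenvalues]
    have : ∀ i ∈ Finset.univ, (0:ℝ) < hS.1.eigenvalues i := fun i _ => by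
      linarith [(myEigBounds P0 i).1]
    simpa using Finset.prod_pos this
  have hdetT : T.det * T.det = ((1 : Matrix (Fin r) (Fin r) ℝ) + P0ᵀ * P0).det := by
    rw [← det_mul, mySqrtMulSelf P0]
  have hTu : IsUnit T.det := by
    rw [isUnit_iff_ne_zero]
    intro h
    rw [h, mul_zero] at hdetT
    exact absurd hdetT.symm (ne_of_gt hdetS)
  have hTl : T⁻¹ * T = 1 := nonsing_inv_mul T hTu
  have hTr : T * T⁻¹ = 1 := mul_nonsing_inv T hTu
  have hBcB : Bcᵀ * B = 0 := by
    have h := congrArg transpose hBBc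
    simpa [transpose_mul] using h
  have hCC : (B + Bc * P0)ᵀ * (B + Bc * P0) = 1 + P0ᵀ * P0 := by
    rw [transpose_add, transpose_mul, Matrix.add_mul, Matrix.mul_add, Matrix.mul_add, hB,
      ← Matrix.mul_assoc Bᵀ Bc P0, hBBc, Matrix.zero_mul,
      Matrix.mul_assoc P0ᵀ Bcᵀ B, hBcB, Matrix.mul_zero,
      Matrix.mul_assoc P0ᵀ Bcᵀ (Bc * P0), ← Matrix.mul_assoc Bcᵀ Bc P0, hBc, Matrix.one_mul]
    abel
  have hTsym : T⁻¹ᵀ = T⁻¹ := by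
    have h1 : Tᵀ = T := by
      have h2 : Tᴴ = T := mySqrtHerm P0
      rwa [Matrix.conjTranspose_eq_transpose_of_trivial] at h2
    rw [transpose_nonsing_inv, h1]
  constructor
  · rw [transpose_mul, hTsym]
    calc T⁻¹ * (B + Bc * P0)ᵀ * ((B + Bc * P0) * T⁻¹)
        = T⁻¹ * ((B + Bc * P0)ᵀ * (B + Bc * P0)) * T⁻¹ := by
          simp only [Matrix.mul_assoc]
      _ = T⁻¹ * (T * T) * T⁻¹ := by rw [hCC, mySqrtMulSelf P0]
      _ = (T⁻¹ * T) * (T * T⁻¹) := by simp only [Matrix.mul_assoc]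
      _ = 1 := by rw [hTl, hTr, Matrix.one_mul]
  · rw [mySpecNorm_eq, mySpecNorm_eq]
    exact myBound hr B Bc hB hBc hBBc P0
end

section
/- Let M1 be a real r1×n matrix and M2 a real r2×n matrix, and let M be the (r1+r2)×(r1+r2) real symmetric block matrix M = [[M1 M1ᵀ, M1 M2ᵀ], [M2 M1ᵀ, M2 M2ᵀ]]. If λ_{r1}(M1 M1ᵀ) > λ_1(M2 M2ᵀ), then for every j with 1 ≤ j ≤ r2: λ_j(M2 M2ᵀ) − λ_1(M1 M2ᵀ M2 M1ᵀ) / (λ_{r1}(M1 M1ᵀ) − λ_j(M2 M2ᵀ)) ≤ λ_{r1+j}(M) ≤ λ_j(M2 M2ᵀ). -/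
open Matrix

section Helpers
variable {m : ℕ} {A : Matrix (Fin m) (Fin m) ℝ} (hA : A.IsHermitian)

local notation "⟪" x ", " y "⟫" => @inner ℝ _ _ x y

lemma inner_eq_dot (x y : EuclideanSpace ℝ (Fin m)) : ⟪x, y⟫ = x ⬝ᵥ y := by
  simp [PiLp.inner_apply, dotProduct, mul_comm]

noncomputable def evec (i : Fin m) : Fin m → ℝ := ⇑(hA.eigenvectorBasis i)

lemma evec_dot (i j : Fin m) : evec hA i ⬝ᵥ evec hA j = if i = j then 1 else 0 := by
  have h := hA.eigenvectorBasis.orthonormal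
  rw [orthonormal_iff_ite] at h
  have := h i j
  rwa [inner_eq_dot] at this

-- coefficients
noncomputable def coeffs (x : Fin m → ℝ) : Fin m → ℝ := fun i => evec hA i ⬝ᵥ x

lemma coeffs_eq (x : Fin m → ℝ) :
    coeffs hA x = (star (hA.eigenvectorUnitary : Matrix (Fin m) (Fin m) ℝ)) *ᵥ x := by
  funext i
  simp [coeffs, mulVec, dotProduct, evec, star_apply]

lemma mulVec_U_coeffs (x : Fin m → ℝ) :
    (hA.eigenvectorUnitary : Matrix (Fin m) (Fin m) ℝ) *ᵥ coeffs hA x = x := by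
  rw [coeffs_eq, mulVec_mulVec]
  have h1 : (hA.eigenvectorUnitary : Matrix (Fin m) (Fin m) ℝ) *
      star (hA.eigenvectorUnitary : Matrix (Fin m) (Fin m) ℝ) = 1 :=
    Unitary.mul_star_self_of_mem hA.eigenvectorUnitary.prop
  rw [h1, one_mulVec]

lemma quad_decomp (x : Fin m → ℝ) :
    x ⬝ᵥ A *ᵥ x = ∑ i, hA.eigenvalues i * (coeffs hA x i) ^ 2 := by
  set U := (hA.eigenvectorUnitary : Matrix (Fin m) (Fin m) ℝ) with hU
  have hspec := hA.spectral_theorem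
  have : A *ᵥ x = U *ᵥ (diagonal hA.eigenvalues *ᵥ coeffs hA x) := by
    rw [coeffs_eq, mulVec_mulVec, mulVec_mulVec, ← hU]
    conv_lhs => rw [hspec]
    norm_num [Function.comp_def]
    rfl
  rw [this, dotProduct_mulVec, ← mulVec_transpose]
  have hUt : Uᵀ = star U := by
    rw [star_eq_conjTranspose, conjTranspose_eq_transpose_of_trivial]
  rw [hUt, ← coeffs_eq]
  simp [dotProduct, mulVec_diagonal]
  apply Finset.sum_congr rfl
  intro i _
  ring

lemma norm_decomp (x : Fin m → ℝ) :
    x ⬝ᵥ x = ∑ i, (coeffs hA x i) ^ 2 := by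
  conv_lhs => rw [← mulVec_U_coeffs hA x]
  set U := (hA.eigenvectorUnitary : Matrix (Fin m) (Fin m) ℝ) with hU
  set c := coeffs hA x
  rw [dotProduct_mulVec, ← mulVec_transpose]
  have hUt : Uᵀ = star U := by
    rw [star_eq_conjTranspose, conjTranspose_eq_transpose_of_trivial]
  rw [hUt, mulVec_mulVec]
  have h1 : star U * U = 1 := Unitary.star_mul_self_of_mem hA.eigenvectorUnitary.prop
  rw [h1, one_mulVec]
  simp [dotProduct, sq]

lemma evec_li : LinearIndependent ℝ (evec hA) := by
  rw [Fintype.linearIndependent_iff]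
  intro g hg j
  have := congrArg (fun z => evec hA j ⬝ᵥ z) hg
  simp only [dotProduct, Finset.sum_apply, Pi.smul_apply, smul_eq_mul, Pi.zero_apply,
    mul_zero, Finset.sum_const_zero, Finset.mul_sum] at this
  rw [Finset.sum_comm] at this
  have h2 : ∀ i, ∑ k, evec hA j k * (g i * evec hA i k) = g i * (evec hA j ⬝ᵥ evec hA i) := by
    intro i; rw [dotProduct, Finset.mul_sum]; apply Finset.sum_congr rfl; intro k _; ring
  simp only [h2, evec_dot, mul_ite, mul_one, mul_zero, Finset.sum_ite_eq', Finset.mem_univ,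
    if_true] at this
  simpa using this

lemma coeffs_vanish {s : Set (Fin m)} {i : Fin m} (hi : i ∉ s) {x : Fin m → ℝ}
    (hx : x ∈ Submodule.span ℝ (evec hA '' s)) : coeffs hA x i = 0 := by
  induction hx using Submodule.span_induction with
  | mem y hy =>
    obtain ⟨j, hj, rfl⟩ := hy
    have : i ≠ j := fun h => hi (h ▸ hj)
    simp [coeffs, evec_dot, this]
  | zero => simp [coeffs]
  | add y z _ _ hy hz => simp [coeffs, dotProduct_add] at *; rw [hy, hz]; ring
  | smul a y _ hy =>
    show evec hA i ⬝ᵥ (a • y) = 0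
    rw [dotProduct_smul]
    have : evec hA i ⬝ᵥ y = 0 := hy
    rw [this]; simp

lemma quad_le_on_span {s : Set (Fin m)} {t : ℝ} (ht : ∀ i ∈ s, hA.eigenvalues i ≤ t)
    {x : Fin m → ℝ} (hx : x ∈ Submodule.span ℝ (evec hA '' s)) :
    x ⬝ᵥ A *ᵥ x ≤ t * (x ⬝ᵥ x) := by
  rw [quad_decomp hA, norm_decomp hA, Finset.mul_sum]
  apply Finset.sum_le_sum
  intro i _
  by_cases hi : i ∈ s
  · exact mul_le_mul_of_nonneg_right (ht i hi) (sq_nonneg _)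
  · rw [coeffs_vanish hA hi hx]; simp

lemma quad_ge_on_span {s : Set (Fin m)} {t : ℝ} (ht : ∀ i ∈ s, t ≤ hA.eigenvalues i)
    {x : Fin m → ℝ} (hx : x ∈ Submodule.span ℝ (evec hA '' s)) :
    t * (x ⬝ᵥ x) ≤ x ⬝ᵥ A *ᵥ x := by
  rw [quad_decomp hA, norm_decomp hA, Finset.mul_sum]
  apply Finset.sum_le_sum
  intro i _
  by_cases hi : i ∈ s
  · exact mul_le_mul_of_nonneg_right (ht i hi) (sq_nonneg _)
  · rw [coeffs_vanish hA hi hx]; simp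

/-- the sorting permutation for `eigsDesc` -/
noncomputable def descPerm : Equiv.Perm (Fin m) :=
  (Fin.revPerm).trans (Tuple.sort hA.eigenvalues)
lemma eigsDesc_eq (i : Fin m) : eigsDesc hA i = hA.eigenvalues (descPerm hA i) := rfl

lemma eigsDesc_antitone : Antitone (eigsDesc hA) := by
  intro i j hij
  have h := Tuple.monotone_sort hA.eigenvalues
  exact h (show (Fin.rev j) ≤ Fin.rev i from Fin.rev_le_rev.mpr hij)

lemma eigenvalues_eq_eigsDesc (i : Fin m) :
    hA.eigenvalues i = eigsDesc hA ((descPerm hA).symm i) := by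
  rw [eigsDesc_eq, Equiv.apply_symm_apply]

lemma quad_le_max (hm : 0 < m) (x : Fin m → ℝ) :
    x ⬝ᵥ A *ᵥ x ≤ eigsDesc hA ⟨0, hm⟩ * (x ⬝ᵥ x) := by
  rw [quad_decomp hA, norm_decomp hA, Finset.mul_sum]
  apply Finset.sum_le_sum
  intro i _
  refine mul_le_mul_of_nonneg_right ?_ (sq_nonneg _)
  rw [eigenvalues_eq_eigsDesc hA i]
  refine eigsDesc_antitone hA ?_
  simp [Fin.le_def]

lemma quad_ge_min (hm : 0 < m) (x : Fin m → ℝ) :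
    eigsDesc hA ⟨m - 1, by omega⟩ * (x ⬝ᵥ x) ≤ x ⬝ᵥ A *ᵥ x := by
  rw [quad_decomp hA, norm_decomp hA, Finset.mul_sum]
  apply Finset.sum_le_sum
  intro i _
  refine mul_le_mul_of_nonneg_right ?_ (sq_nonneg _)
  rw [eigenvalues_eq_eigsDesc hA i]
  refine eigsDesc_antitone hA ?_
  rw [Fin.le_def]
  have := ((descPerm hA).symm i).isLt
  simp only []
  omega

lemma dot_self_nonneg (x : Fin m → ℝ) : 0 ≤ x ⬝ᵥ x :=
  Finset.sum_nonneg fun i _ => mul_self_nonneg (x i)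

lemma dot_self_pos {x : Fin m → ℝ} (hx : x ≠ 0) : 0 < x ⬝ᵥ x := by
  obtain ⟨j, hj⟩ : ∃ j, x j ≠ 0 := by
    by_contra h; push_neg at h; exact hx (funext h)
  exact Finset.sum_pos' (fun i _ => mul_self_nonneg (x i))
    ⟨j, Finset.mem_univ j, mul_self_pos.mpr hj⟩

lemma finrank_fun : Module.finrank ℝ (Fin m → ℝ) = m := by
  simp

lemma eigsDesc_le_of_subspace (k : Fin m) (t : ℝ) (V : Submodule ℝ (Fin m → ℝ))
    (hdim : m - k.val ≤ Module.finrank ℝ V)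
    (hV : ∀ x ∈ V, x ⬝ᵥ A *ᵥ x ≤ t * (x ⬝ᵥ x)) : eigsDesc hA k ≤ t := by
  classical
  set S : Set (Fin m) := (descPerm hA) '' {i | i ≤ k} with hS
  set W := Submodule.span ℝ (evec hA '' S) with hWdef
  have hli : LinearIndependent ℝ
      (fun i : (Finset.Iic k : Finset (Fin m)) => evec hA (descPerm hA i)) :=
    (evec_li hA).comp _ (((descPerm hA).injective).comp Subtype.val_injective)
  have hrange : Set.range (fun i : (Finset.Iic k : Finset (Fin m)) =>
      evec hA (descPerm hA i)) = evec hA '' S := by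
    ext y
    simp only [Set.mem_range, Set.mem_image, hS, Subtype.exists, Finset.mem_Iic]
    constructor
    · rintro ⟨i, hi, rfl⟩; exact ⟨descPerm hA i, ⟨i, hi, rfl⟩, rfl⟩
    · rintro ⟨z, ⟨i, hi, rfl⟩, rfl⟩; exact ⟨i, hi, rfl⟩
  have hWrank : Module.finrank ℝ W = k.val + 1 := by
    rw [hWdef, ← hrange, finrank_span_eq_card hli, Fintype.card_coe, Fin.card_Iic]
  have hsum := Submodule.finrank_sup_add_finrank_inf_eq V W
  have hsup : Module.finrank ℝ ((V ⊔ W : Submodule ℝ (Fin m → ℝ)) : Submodule ℝ (Fin m → ℝ)) ≤ m := by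
    have := Submodule.finrank_le (V ⊔ W)
    rwa [finrank_fun] at this
  have hinf : 0 < Module.finrank ℝ (V ⊓ W : Submodule ℝ (Fin m → ℝ)) := by
    have hk := k.isLt; omega
  have hne : (V ⊓ W : Submodule ℝ (Fin m → ℝ)) ≠ ⊥ := by
    intro h
    rw [h, finrank_bot] at hinf
    exact lt_irrefl 0 hinf
  obtain ⟨x, hxVW, hx0⟩ := Submodule.exists_mem_ne_zero_of_ne_bot hne
  have hxV : x ∈ V := hxVW.1
  have hxW : x ∈ W := hxVW.2
  have hbound : ∀ i ∈ S, eigsDesc hA k ≤ hA.eigenvalues i := by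
    rintro i ⟨i', hi', rfl⟩
    rw [← eigsDesc_eq]
    exact eigsDesc_antitone hA hi'
  have h1 := quad_ge_on_span hA hbound hxW
  have h2 := hV x hxV
  have h3 := dot_self_pos hx0
  nlinarith

lemma le_eigsDesc_of_subspace (k : Fin m) (t : ℝ) (V : Submodule ℝ (Fin m → ℝ))
    (hdim : k.val + 1 ≤ Module.finrank ℝ V)
    (hV : ∀ x ∈ V, t * (x ⬝ᵥ x) ≤ x ⬝ᵥ A *ᵥ x) : t ≤ eigsDesc hA k := by
  classical
  set S : Set (Fin m) := (descPerm hA) '' {i | k ≤ i} with hS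
  set W := Submodule.span ℝ (evec hA '' S) with hWdef
  have hli : LinearIndependent ℝ
      (fun i : (Finset.Ici k : Finset (Fin m)) => evec hA (descPerm hA i)) :=
    (evec_li hA).comp _ (((descPerm hA).injective).comp Subtype.val_injective)
  have hrange : Set.range (fun i : (Finset.Ici k : Finset (Fin m)) =>
      evec hA (descPerm hA i)) = evec hA '' S := by
    ext y
    simp only [Set.mem_range, Set.mem_image, hS, Subtype.exists, Finset.mem_Ici]
    constructor
    · rintro ⟨i, hi, rfl⟩; exact ⟨descPerm hA i, ⟨i, hi, rfl⟩, rfl⟩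
    · rintro ⟨z, ⟨i, hi, rfl⟩, rfl⟩; exact ⟨i, hi, rfl⟩
  have hWrank : Module.finrank ℝ W = m - k.val := by
    rw [hWdef, ← hrange, finrank_span_eq_card hli, Fintype.card_coe, Fin.card_Ici]
  have hsum := Submodule.finrank_sup_add_finrank_inf_eq V W
  have hsup : Module.finrank ℝ ((V ⊔ W : Submodule ℝ (Fin m → ℝ)) : Submodule ℝ (Fin m → ℝ)) ≤ m := by
    have := Submodule.finrank_le (V ⊔ W)
    rwa [finrank_fun] at this
  have hinf : 0 < Module.finrank ℝ (V ⊓ W : Submodule ℝ (Fin m → ℝ)) := by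
    have hk := k.isLt; omega
  have hne : (V ⊓ W : Submodule ℝ (Fin m → ℝ)) ≠ ⊥ := by
    intro h
    rw [h, finrank_bot] at hinf
    exact lt_irrefl 0 hinf
  obtain ⟨x, hxVW, hx0⟩ := Submodule.exists_mem_ne_zero_of_ne_bot hne
  have hxV : x ∈ V := hxVW.1
  have hxW : x ∈ W := hxVW.2
  have hbound : ∀ i ∈ S, hA.eigenvalues i ≤ eigsDesc hA k := by
    rintro i ⟨i', hi', rfl⟩
    rw [← eigsDesc_eq]
    exact eigsDesc_antitone hA hi'
  have h1 := quad_le_on_span hA hbound hxW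
  have h2 := hV x hxV
  have h3 := dot_self_pos hx0
  nlinarith

end Helpers

section Blocks

variable {r1 r2 : ℕ}

/-- embedding of the first block of coordinates -/
def emb1 : (Fin r1 → ℝ) →ₗ[ℝ] (Fin (r1 + r2) → ℝ) where
  toFun u := Sum.elim u 0 ∘ finSumFinEquiv.symm
  map_add' u v := by
    funext z
    cases hz : finSumFinEquiv.symm z <;> simp [Function.comp, hz]
  map_smul' a u := by
    funext z
    cases hz : finSumFinEquiv.symm z <;> simp [Function.comp, hz]

/-- embedding of the second block of coordinates -/
def emb2 : (Fin r2 → ℝ) →ₗ[ℝ] (Fin (r1 + r2) → ℝ) where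
  toFun y := Sum.elim 0 y ∘ finSumFinEquiv.symm
  map_add' u v := by
    funext z
    cases hz : finSumFinEquiv.symm z <;> simp [Function.comp, hz]
  map_smul' a u := by
    funext z
    cases hz : finSumFinEquiv.symm z <;> simp [Function.comp, hz]

lemma emb1_add_emb2 (u : Fin r1 → ℝ) (y : Fin r2 → ℝ) :
    emb1 u + emb2 y = Sum.elim u y ∘ finSumFinEquiv.symm := by
  funext z
  have : emb1 u z + emb2 y z = Sum.elim u (0 : Fin r2 → ℝ) (finSumFinEquiv.symm z) +
      Sum.elim (0 : Fin r1 → ℝ) y (finSumFinEquiv.symm z) := rfl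
  rw [Pi.add_apply, this]
  cases hz : finSumFinEquiv.symm z <;> simp [Function.comp, hz]

lemma emb1_inj : Function.Injective (emb1 (r1 := r1) (r2 := r2)) := by
  intro u v h
  funext i
  have := congrFun h (finSumFinEquiv (Sum.inl i))
  simpa [emb1, Function.comp] using this

lemma emb2_inj : Function.Injective (emb2 (r1 := r1) (r2 := r2)) := by
  intro u v h
  funext i
  have := congrFun h (finSumFinEquiv (Sum.inr i))
  simpa [emb2, Function.comp] using this

lemma elim_dot_elim (u v : Fin r1 → ℝ) (y w : Fin r2 → ℝ) :
    (Sum.elim u y ∘ finSumFinEquiv.symm) ⬝ᵥ (Sum.elim v w ∘ finSumFinEquiv.symm) =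
      u ⬝ᵥ v + y ⬝ᵥ w := by
  rw [comp_equiv_dotProduct_comp_equiv, sumElim_dotProduct_sumElim]

lemma quad_blocks (A : Matrix (Fin r1) (Fin r1) ℝ) (B : Matrix (Fin r1) (Fin r2) ℝ)
    (C : Matrix (Fin r2) (Fin r1) ℝ) (D : Matrix (Fin r2) (Fin r2) ℝ)
    (u : Fin r1 → ℝ) (y : Fin r2 → ℝ) :
    (Sum.elim u y ∘ finSumFinEquiv.symm) ⬝ᵥ
      ((reindex finSumFinEquiv finSumFinEquiv (fromBlocks A B C D)) *ᵥ
        (Sum.elim u y ∘ finSumFinEquiv.symm)) =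
      u ⬝ᵥ A *ᵥ u + u ⬝ᵥ B *ᵥ y + y ⬝ᵥ C *ᵥ u + y ⬝ᵥ D *ᵥ y := by
  rw [reindex_apply, submatrix_mulVec_equiv]
  have h1 : (Sum.elim u y ∘ finSumFinEquiv.symm) ∘ finSumFinEquiv.symm.symm = Sum.elim u y := by
    funext z; simp
  rw [h1, comp_equiv_dotProduct_comp_equiv, fromBlocks_mulVec, sumElim_dotProduct_sumElim,
    dotProduct_add, dotProduct_add, Sum.elim_comp_inl, Sum.elim_comp_inr]
  ring

end Blocks

set_option maxHeartbeats 1000000 in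
/-- Eigenvalue bounds for the `(r1+r2) × (r1+r2)` Gram block matrix
`M = [[M1 M1ᵀ, M1 M2ᵀ], [M2 M1ᵀ, M2 M2ᵀ]]` when `λ_{r1}(M1 M1ᵀ) > λ_1(M2 M2ᵀ)`:
for `1 ≤ j ≤ r2` (here `j : Fin r2` is 0-based, so `eigsDesc · j` is `λ_{j+1}`),
`λ_j(M2 M2ᵀ) − λ_1((M1 M2ᵀ)(M1 M2ᵀ)ᵀ) / (λ_{r1}(M1 M1ᵀ) − λ_j(M2 M2ᵀ))
  ≤ λ_{r1+j}(M) ≤ λ_j(M2 M2ᵀ)`. -/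
theorem gram_block_eigenvalue_bounds {n r1 r2 : ℕ} (hr1 : 0 < r1) (hr2 : 0 < r2)
    (M1 : Matrix (Fin r1) (Fin n) ℝ) (M2 : Matrix (Fin r2) (Fin n) ℝ)
    (M : Matrix (Fin (r1 + r2)) (Fin (r1 + r2)) ℝ)
    (hMdef : M = (Matrix.reindex finSumFinEquiv finSumFinEquiv)
        (Matrix.fromBlocks (M1 * M1ᵀ) (M1 * M2ᵀ) (M2 * M1ᵀ) (M2 * M2ᵀ)))
    (hM : M.IsHermitian)
    (hgap : eigsDesc (isHermitian_mul_transpose_self M1) ⟨r1 - 1, by omega⟩ >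
        eigsDesc (isHermitian_mul_transpose_self M2) ⟨0, hr2⟩) :
    ∀ j : Fin r2,
      eigsDesc (isHermitian_mul_transpose_self M2) j -
          eigsDesc (isHermitian_mul_transpose_self (M1 * M2ᵀ)) ⟨0, hr1⟩ /
            (eigsDesc (isHermitian_mul_transpose_self M1) ⟨r1 - 1, by omega⟩ -
              eigsDesc (isHermitian_mul_transpose_self M2) j) ≤
        eigsDesc hM ⟨r1 + j.val, by have := j.2; omega⟩ ∧
      eigsDesc hM ⟨r1 + j.val, by have := j.2; omega⟩ ≤
        eigsDesc (isHermitian_mul_transpose_self M2) j := by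
  classical
  intro j
  subst hMdef
  set A1 := M1 * M1ᵀ with hA1def
  set D2 := M2 * M2ᵀ with hD2def
  set B := M1 * M2ᵀ with hBdef
  have hA1 : A1.IsHermitian := isHermitian_mul_transpose_self M1
  have hD : D2.IsHermitian := isHermitian_mul_transpose_self M2
  have hB : (B * Bᵀ).IsHermitian := isHermitian_mul_transpose_self B
  set α := eigsDesc (isHermitian_mul_transpose_self M1) ⟨r1 - 1, by omega⟩ with hαdef
  set β := eigsDesc (isHermitian_mul_transpose_self B) ⟨0, hr1⟩ with hβdef
  set μ := eigsDesc (isHermitian_mul_transpose_self M2) j with hμdef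
  set δ := α - μ with hδdef
  have hμ0 : μ ≤ eigsDesc (isHermitian_mul_transpose_self M2) ⟨0, hr2⟩ :=
    eigsDesc_antitone _ (by simp [Fin.le_def])
  have hδpos : 0 < δ := by
    have := hgap
    simp only [hδdef]
    linarith
  have hβ0 : 0 ≤ β := by
    rw [hβdef, eigsDesc_eq]
    have hpsd : (B * Bᵀ).PosSemidef := by
      have := Matrix.posSemidef_self_mul_conjTranspose B
      rwa [Matrix.conjTranspose_eq_transpose_of_trivial] at this
    exact hpsd.eigenvalues_nonneg _
  set k : Fin (r1 + r2) := ⟨r1 + j.val, by have := j.2; omega⟩ with hkdef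
  constructor
  · -- lower bound
    set ST : Set (Fin r2) := (descPerm hD) '' {i | i ≤ j} with hSTdef
    set W := Submodule.span ℝ (evec hD '' ST) with hWdef
    set V1 := Submodule.map (emb1 (r1 := r1) (r2 := r2)) ⊤ with hV1def
    set V2 := Submodule.map (emb2 (r1 := r1)) W with hV2def
    have hbound : ∀ i ∈ ST, μ ≤ hD.eigenvalues i := by
      rintro i ⟨i', hi', rfl⟩
      rw [← eigsDesc_eq]
      exact eigsDesc_antitone hD hi'
    -- ranks
    have hV1rank : Module.finrank ℝ V1 = r1 := by
      rw [hV1def, Submodule.map_top, LinearMap.finrank_range_of_inj emb1_inj, finrank_fun]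
    have hV2rank : Module.finrank ℝ V2 = j.val + 1 := by
      have hli : LinearIndependent ℝ
          (fun i : (Finset.Iic j : Finset (Fin r2)) =>
            emb2 (r1 := r1) (evec hD (descPerm hD i))) := by
        have h1 : LinearIndependent ℝ
            (fun i : (Finset.Iic j : Finset (Fin r2)) => evec hD (descPerm hD i)) :=
          (evec_li hD).comp _ (((descPerm hD).injective).comp Subtype.val_injective)
        exact h1.map' _ (LinearMap.ker_eq_bot.mpr emb2_inj)
      have hrange : Set.range (fun i : (Finset.Iic j : Finset (Fin r2)) =>
          emb2 (r1 := r1) (evec hD (descPerm hD i))) = emb2 (r1 := r1) '' (evec hD '' ST) := by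
        ext z
        simp only [Set.mem_range, Set.mem_image, hSTdef, Subtype.exists, Finset.mem_Iic,
          Set.mem_setOf_eq]
        constructor
        · rintro ⟨i, hi, rfl⟩
          exact ⟨evec hD (descPerm hD i), ⟨descPerm hD i, ⟨i, hi, rfl⟩, rfl⟩, rfl⟩
        · rintro ⟨w, ⟨z', ⟨i, hi, rfl⟩, rfl⟩, rfl⟩; exact ⟨i, hi, rfl⟩
      rw [hV2def, hWdef, Submodule.map_span, ← hrange, finrank_span_eq_card hli,
        Fintype.card_coe, Fin.card_Iic]
    have hinfbot : V1 ⊓ V2 = ⊥ := by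
      rw [Submodule.eq_bot_iff]
      rintro x ⟨hx1, hx2⟩
      obtain ⟨u, -, rfl⟩ := Submodule.mem_map.mp hx1
      obtain ⟨y, -, hxy⟩ := Submodule.mem_map.mp hx2
      have hu : u = 0 := by
        funext i
        have := congrFun hxy (finSumFinEquiv (Sum.inl i))
        simpa [emb1, emb2, Function.comp] using this.symm
      rw [hu, map_zero]
    have hVrank : Module.finrank ℝ (V1 ⊔ V2 : Submodule ℝ (Fin (r1 + r2) → ℝ)) =
        r1 + j.val + 1 := by
      have := Submodule.finrank_sup_add_finrank_inf_eq V1 V2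
      rw [hinfbot, finrank_bot, hV1rank, hV2rank] at this
      omega
    apply le_eigsDesc_of_subspace hM k _ (V1 ⊔ V2)
    · rw [hVrank]
    · intro x hx
      obtain ⟨x1, hx1, x2, hx2, rfl⟩ := Submodule.mem_sup.mp hx
      obtain ⟨u, -, rfl⟩ := Submodule.mem_map.mp hx1
      obtain ⟨y, hy, rfl⟩ := Submodule.mem_map.mp hx2
      rw [emb1_add_emb2, quad_blocks, elim_dot_elim]
      set a := u ⬝ᵥ u with hadef
      set b := y ⬝ᵥ y with hbdef2
      set c := u ⬝ᵥ B *ᵥ y with hcdef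
      have ha0 : 0 ≤ a := dot_self_nonneg u
      have hb0 : 0 ≤ b := dot_self_nonneg y
      -- cross term symmetry
      have hcross : y ⬝ᵥ (M2 * M1ᵀ) *ᵥ u = c := by
        rw [hcdef, dotProduct_mulVec y, ← mulVec_transpose, transpose_mul, transpose_transpose,
          ← hBdef, dotProduct_comm, dotProduct_mulVec u, ← mulVec_transpose]
      -- diagonal bounds
      have hqA : α * a ≤ u ⬝ᵥ A1 *ᵥ u := quad_ge_min hA1 hr1 u
      have hqD : μ * b ≤ y ⬝ᵥ D2 *ᵥ y := quad_ge_on_span hD hbound hy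
      -- Cauchy–Schwarz for the cross term
      have hc2 : c ^ 2 ≤ β * a * b := by
        have hc' : c = (Bᵀ *ᵥ u) ⬝ᵥ y := by
          rw [hcdef, dotProduct_mulVec, ← mulVec_transpose]
        have hww : (Bᵀ *ᵥ u) ⬝ᵥ (Bᵀ *ᵥ u) = u ⬝ᵥ (B * Bᵀ) *ᵥ u := by
          rw [dotProduct_mulVec (Bᵀ *ᵥ u), ← mulVec_transpose, transpose_transpose,
            mulVec_mulVec, dotProduct_comm]
        have hwwle : (Bᵀ *ᵥ u) ⬝ᵥ (Bᵀ *ᵥ u) ≤ β * a := by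
          rw [hww]; exact quad_le_max hB hr1 u
        have hcs2 : c ^ 2 ≤ ((Bᵀ *ᵥ u) ⬝ᵥ (Bᵀ *ᵥ u)) * b := by
          have := Finset.sum_mul_sq_le_sq_mul_sq Finset.univ (Bᵀ *ᵥ u) y
          rw [hc']
          calc ((Bᵀ *ᵥ u) ⬝ᵥ y) ^ 2 = (∑ i, (Bᵀ *ᵥ u) i * y i) ^ 2 := rfl
            _ ≤ (∑ i, ((Bᵀ *ᵥ u) i) ^ 2) * (∑ i, (y i) ^ 2) := this
            _ = ((Bᵀ *ᵥ u) ⬝ᵥ (Bᵀ *ᵥ u)) * b := by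
                rw [hbdef2]
                congr 1 <;> · apply Finset.sum_congr rfl; intro i _; ring
        calc c ^ 2 ≤ ((Bᵀ *ᵥ u) ⬝ᵥ (Bᵀ *ᵥ u)) * b := hcs2
          _ ≤ β * a * b := by nlinarith
      have hwsqrt : -Real.sqrt (β * a * b) ≤ c := by
        have h1 : |c| ≤ Real.sqrt (β * a * b) := by
          rw [← Real.sqrt_sq_eq_abs]
          exact Real.sqrt_le_sqrt hc2
        linarith [neg_abs_le c]
      have key : 2 * Real.sqrt (β * a * b) ≤ δ * a + (β / δ) * b := by
        have h1 : Real.sqrt (β * a * b) = Real.sqrt (δ * a) * Real.sqrt ((β / δ) * b) := by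
          rw [← Real.sqrt_mul (by positivity)]
          congr 1
          field_simp
        rw [h1]
        nlinarith [sq_nonneg (Real.sqrt (δ * a) - Real.sqrt ((β / δ) * b)),
          Real.sq_sqrt (show (0:ℝ) ≤ δ * a by positivity),
          Real.sq_sqrt (show (0:ℝ) ≤ (β / δ) * b by positivity)]
      have hβδa : 0 ≤ (β / δ) * a := by positivity
      rw [hcross]
      have hα : α = μ + δ := by rw [hδdef]; ring
      nlinarith [hqA, hqD, hwsqrt, key, hβδa]
  · -- upper bound
    set SD : Set (Fin r2) := (descPerm hD) '' {i | j ≤ i} with hSDdef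
    set W := Submodule.span ℝ (evec hD '' SD) with hWdef
    set V := Submodule.map (emb2 (r1 := r1)) W with hVdef
    have hbound : ∀ i ∈ SD, hD.eigenvalues i ≤ μ := by
      rintro i ⟨i', hi', rfl⟩
      rw [← eigsDesc_eq]
      exact eigsDesc_antitone hD hi'
    apply eigsDesc_le_of_subspace hM k μ V
    · -- dimension
      have hli : LinearIndependent ℝ
          (fun i : (Finset.Ici j : Finset (Fin r2)) =>
            emb2 (r1 := r1) (evec hD (descPerm hD i))) := by
        have h1 : LinearIndependent ℝ
            (fun i : (Finset.Ici j : Finset (Fin r2)) => evec hD (descPerm hD i)) :=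
          (evec_li hD).comp _ (((descPerm hD).injective).comp Subtype.val_injective)
        exact h1.map' _ (LinearMap.ker_eq_bot.mpr emb2_inj)
      have hrange : Set.range (fun i : (Finset.Ici j : Finset (Fin r2)) =>
          emb2 (r1 := r1) (evec hD (descPerm hD i))) = emb2 (r1 := r1) '' (evec hD '' SD) := by
        ext z
        simp only [Set.mem_range, Set.mem_image, hSDdef, Subtype.exists, Finset.mem_Ici,
          Set.mem_setOf_eq]
        constructor
        · rintro ⟨i, hi, rfl⟩; exact ⟨evec hD (descPerm hD i), ⟨descPerm hD i, ⟨i, hi, rfl⟩, rfl⟩, rfl⟩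
        · rintro ⟨w, ⟨z', ⟨i, hi, rfl⟩, rfl⟩, rfl⟩; exact ⟨i, hi, rfl⟩
      have hVrank : Module.finrank ℝ V = r2 - j.val := by
        rw [hVdef, hWdef, Submodule.map_span, ← hrange, finrank_span_eq_card hli,
          Fintype.card_coe, Fin.card_Ici]
      rw [hVrank]
      simp only [hkdef]
      omega
    · -- quadratic form bound
      intro x hx
      obtain ⟨y, hy, rfl⟩ := Submodule.mem_map.mp hx
      have hx2 : emb2 (r1 := r1) y = Sum.elim (0 : Fin r1 → ℝ) y ∘ finSumFinEquiv.symm := rfl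
      rw [hx2, quad_blocks, elim_dot_elim]
      simp only [zero_dotProduct, mulVec_zero, dotProduct_zero, zero_add, add_zero]
      exact quad_le_on_span hD hbound hy
end
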